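/- arXiv:2504.13013 — 2 statements merged into one kernel-verified Lean document; each statement's English description precedes it below -/
import Mathlib

section
/- Let K = conv{a, b, c} be a triangle in ℝ² with x = ‖b − c‖ ≤ y = ‖a − c‖, and let U be the perpendicular bisector of the segment [a, b] with z = ‖a − b‖. Then R(K, Φ_U(K)) = 1 + (y² − x²)/z², where Φ_U is the reflection across U and R the circumradius. -/
open Pointwise EuclideanGeometry
open scoped RealInnerProductSpace

/-- The circumradius of `K` with respect to `C`: the smallest `t > 0` such that a
translate of `t • C` contains `K`. -/
noncomputable def circumradius (K C : Set (EuclideanSpace ℝ (Fin 2))) : ℝ :=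
  sInf {t : ℝ | 0 < t ∧ ∃ z : EuclideanSpace ℝ (Fin 2), K ⊆ {z} + t • C}

instance {V P : Type*} [NormedAddCommGroup V] [InnerProductSpace ℝ V]
    [MetricSpace P] [NormedAddTorsor V P] (p₁ p₂ : P) :
    Nonempty (AffineSubspace.perpBisector p₁ p₂) :=
  ⟨⟨_, AffineSubspace.midpoint_mem_perpBisector p₁ p₂⟩⟩

private lemma refl_formula (a b p : EuclideanSpace ℝ (Fin 2)) (β : ℝ)
    (hβ : ⟪p - midpoint ℝ a b - β • (b - a), b - a⟫ = 0) :
    EuclideanGeometry.reflection (AffineSubspace.perpBisector a b) p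
      = p - (2*β) • (b - a) := by
  set q : EuclideanSpace ℝ (Fin 2) := p - β • (b - a) with hq
  have hmem : q ∈ AffineSubspace.perpBisector a b := by
    rw [AffineSubspace.mem_perpBisector_iff_inner_eq_zero]
    have : q -ᵥ midpoint ℝ a b = p - midpoint ℝ a b - β • (b - a) := by
      simp only [hq, vsub_eq_sub]; module
    rw [this]
    simpa [vsub_eq_sub] using hβ
  have hmem2 : q ∈ AffineSubspace.mk' p (AffineSubspace.perpBisector a b).directionᗮ := by
    rw [AffineSubspace.mem_mk', AffineSubspace.direction_perpBisector]
    apply Submodule.le_orthogonal_orthogonal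
    have : q -ᵥ p = (-β) • (b - a) := by simp only [hq, vsub_eq_sub]; module
    rw [this]
    exact Submodule.smul_mem _ _ (Submodule.mem_span_singleton_self _)
  have hproj : (EuclideanGeometry.orthogonalProjection (AffineSubspace.perpBisector a b) p :
      EuclideanSpace ℝ (Fin 2)) = q := by
    have h1 := EuclideanGeometry.inter_eq_singleton_orthogonalProjection
      (s := AffineSubspace.perpBisector a b) p
    have hqmem : q ∈ ({(EuclideanGeometry.orthogonalProjection
        (AffineSubspace.perpBisector a b) p : EuclideanSpace ℝ (Fin 2))} :
        Set (EuclideanSpace ℝ (Fin 2))) := by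
      rw [← h1]; exact ⟨hmem, hmem2⟩
    exact (Set.mem_singleton_iff.1 hqmem).symm
  rw [EuclideanGeometry.reflection_apply', hproj, hq]
  simp only [vsub_eq_sub, vadd_eq_add]
  module

private lemma upper_aux (a b c c' e : EuclideanSpace ℝ (Fin 2)) (α : ℝ)
    (he : e = b - a) (hc' : c' = c - (2*α) • e) (halpha : 0 ≤ α) :
    convexHull ℝ ({a, b, c} : Set (EuclideanSpace ℝ (Fin 2)))
      ⊆ {(1 - (1+2*α)) • a} + (1+2*α) • convexHull ℝ
          ({a, b, c'} : Set (EuclideanSpace ℝ (Fin 2))) := by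
  have hlam0 : (0:ℝ) < 1+2*α := by linarith
  have h4 : (1+2*α : ℝ) ≠ 0 := ne_of_gt hlam0
  have hlaminv : ((1+2*α : ℝ))⁻¹ ≤ 1 := by
    rw [← one_div]; exact (div_le_one hlam0).2 (by linarith)
  have hlaminv0 : (0:ℝ) ≤ ((1+2*α : ℝ))⁻¹ := by positivity
  have haC : a ∈ convexHull ℝ ({a, b, c'} : Set (EuclideanSpace ℝ (Fin 2))) :=
    subset_convexHull ℝ _ (by simp)
  have hbC : b ∈ convexHull ℝ ({a, b, c'} : Set (EuclideanSpace ℝ (Fin 2))) :=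
    subset_convexHull ℝ _ (by simp)
  have hc'C : c' ∈ convexHull ℝ ({a, b, c'} : Set (EuclideanSpace ℝ (Fin 2))) :=
    subset_convexHull ℝ _ (by simp)
  have hconv : Convex ℝ ({(1 - (1+2*α)) • a} + (1+2*α) • convexHull ℝ
      ({a, b, c'} : Set (EuclideanSpace ℝ (Fin 2)))) := by
    rw [Set.singleton_add]
    exact ((convex_convexHull ℝ _).smul _).translate _
  apply convexHull_min _ hconv
  have hmem : ∀ q ∈ convexHull ℝ ({a, b, c'} : Set (EuclideanSpace ℝ (Fin 2))),
      ((1 - (1+2*α)) • a + (1+2*α) • q) ∈ ({(1 - (1+2*α)) • a} + (1+2*α) • convexHull ℝ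
        ({a, b, c'} : Set (EuclideanSpace ℝ (Fin 2)))) :=
    fun q hq => Set.add_mem_add rfl (Set.smul_mem_smul_set hq)
  intro p hp
  simp only [Set.mem_insert_iff, Set.mem_singleton_iff] at hp
  rcases hp with h | h | h
  · rw [h]
    have h2 := hmem a haC
    have h3 : (1 - (1+2*α)) • a + (1+2*α) • a = a := by module
    rwa [h3] at h2
  · rw [h]
    have hq : (1 - (1+2*α)⁻¹) • a + (1+2*α)⁻¹ • b ∈ convexHull ℝ
        ({a, b, c'} : Set (EuclideanSpace ℝ (Fin 2))) :=
      (convex_convexHull ℝ _) haC hbC (by linarith) hlaminv0 (by ring)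
    have h2 := hmem _ hq
    have h3 : (1 - (1+2*α)) • a + (1+2*α) • ((1 - (1+2*α)⁻¹) • a + (1+2*α)⁻¹ • b) = b := by
      match_scalars <;> field_simp <;> ring
    rwa [h3] at h2
  · rw [h]
    have hq : (1+2*α)⁻¹ • c' + (1 - (1+2*α)⁻¹) • b ∈ convexHull ℝ
        ({a, b, c'} : Set (EuclideanSpace ℝ (Fin 2))) :=
      (convex_convexHull ℝ _) hc'C hbC hlaminv0 (by linarith) (by ring)
    have h2 := hmem _ hq
    have h3 : (1 - (1+2*α)) • a + (1+2*α) • ((1+2*α)⁻¹ • c' + (1 - (1+2*α)⁻¹) • b) = c := by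
      rw [hc', he]
      match_scalars <;> (field_simp; try ring)
    rwa [h3] at h2

set_option maxHeartbeats 2000000 in
private lemma lower_aux (a b c c' m e v u : EuclideanSpace ℝ (Fin 2)) (α t : ℝ)
    (hA : a = m + (-(2⁻¹) : ℝ) • e + (0:ℝ) • v)
    (hB : b = m + ((2⁻¹) : ℝ) • e + (0:ℝ) • v)
    (hC : c = m + α • e + (1:ℝ) • v)
    (hC' : c' = m + (-α) • e + (1:ℝ) • v)
    (hve : ⟪v, e⟫ = 0) (hev : ⟪e, v⟫ = 0)
    (hee : (0:ℝ) < ⟪e, e⟫) (hvv : (0:ℝ) < ⟪v, v⟫) (halpha : 0 ≤ α) (ht : 0 < t)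
    (hsub : convexHull ℝ ({a, b, c} : Set (EuclideanSpace ℝ (Fin 2)))
      ⊆ {u} + t • convexHull ℝ ({a, b, c'} : Set (EuclideanSpace ℝ (Fin 2)))) :
    1 + 2*α ≤ t := by
  have expand : ∀ (s₁ s₂ β γ : ℝ), ⟪m + β • e + γ • v, s₁ • v + s₂ • e⟫
      = ⟪m, s₁ • v + s₂ • e⟫ + β * s₂ * ⟪e,e⟫ + γ * s₁ * ⟪v,v⟫ := by
    intro s₁ s₂ β γ
    simp only [inner_add_left, inner_add_right, real_inner_smul_left, real_inner_smul_right,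
      hve, hev]
    ring
  obtain ⟨n₁, hn₁⟩ : ∃ w : EuclideanSpace ℝ (Fin 2),
      w = (-(2*⟪e,e⟫)) • v + (0:ℝ) • e := ⟨_, rfl⟩
  obtain ⟨n₂, hn₂⟩ : ∃ w : EuclideanSpace ℝ (Fin 2),
      w = ((2*α+1)*⟪e,e⟫) • v + (2*⟪v,v⟫) • e := ⟨_, rfl⟩
  obtain ⟨n₃, hn₃⟩ : ∃ w : EuclideanSpace ℝ (Fin 2),
      w = ((1-2*α)*⟪e,e⟫) • v + (-(2*⟪v,v⟫)) • e := ⟨_, rfl⟩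
  have hsum : n₁ + n₂ + n₃ = 0 := by rw [hn₁, hn₂, hn₃]; module
  have hbound : ∀ (n : EuclideanSpace ℝ (Fin 2)) (H : ℝ),
      ⟪a, n⟫ ≤ H → ⟪b, n⟫ ≤ H → ⟪c', n⟫ ≤ H →
      ∀ p ∈ convexHull ℝ ({a, b, c'} : Set (EuclideanSpace ℝ (Fin 2))), ⟪p, n⟫ ≤ H := by
    intro n H h1 h2 h3 p hp
    have hlin : IsLinearMap ℝ (fun w : EuclideanSpace ℝ (Fin 2) => ⟪w, n⟫) :=
      ⟨fun x y => inner_add_left x y n, fun r x => real_inner_smul_left x n r⟩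
    refine convexHull_min (t := {w : EuclideanSpace ℝ (Fin 2) | ⟪w, n⟫ ≤ H}) ?_
      (convex_halfSpace_le hlin H) hp
    intro q hq
    simp only [Set.mem_insert_iff, Set.mem_singleton_iff] at hq
    rcases hq with h | h | h <;> rw [Set.mem_setOf_eq, h] <;> assumption
  have hb1a : ⟪a, n₁⟫ ≤ ⟪m, n₁⟫ := by
    rw [hA, hn₁, expand (-(2*⟪e,e⟫)) 0 (-(2⁻¹)) 0]; nlinarith [hee, hvv, halpha, mul_pos hee hvv]
  have hb1b : ⟪b, n₁⟫ ≤ ⟪m, n₁⟫ := by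
    rw [hB, hn₁, expand (-(2*⟪e,e⟫)) 0 (2⁻¹) 0]; nlinarith [hee, hvv, halpha, mul_pos hee hvv]
  have hb1c : ⟪c', n₁⟫ ≤ ⟪m, n₁⟫ := by
    rw [hC', hn₁, expand (-(2*⟪e,e⟫)) 0 (-α) 1]; nlinarith [hee, hvv, halpha, mul_pos hee hvv]
  have hb2a : ⟪a, n₂⟫ ≤ ⟪m, n₂⟫ + ⟪e,e⟫*⟪v,v⟫ := by
    rw [hA, hn₂, expand ((2*α+1)*⟪e,e⟫) (2*⟪v,v⟫) (-(2⁻¹)) 0]; nlinarith [hee, hvv, halpha, mul_pos hee hvv]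
  have hb2b : ⟪b, n₂⟫ ≤ ⟪m, n₂⟫ + ⟪e,e⟫*⟪v,v⟫ := by
    rw [hB, hn₂, expand ((2*α+1)*⟪e,e⟫) (2*⟪v,v⟫) (2⁻¹) 0]; nlinarith [hee, hvv, halpha, mul_pos hee hvv]
  have hb2c : ⟪c', n₂⟫ ≤ ⟪m, n₂⟫ + ⟪e,e⟫*⟪v,v⟫ := by
    rw [hC', hn₂, expand ((2*α+1)*⟪e,e⟫) (2*⟪v,v⟫) (-α) 1]; nlinarith [hee, hvv, halpha, mul_pos hee hvv]
  have hb3a : ⟪a, n₃⟫ ≤ ⟪m, n₃⟫ + ⟪e,e⟫*⟪v,v⟫ := by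
    rw [hA, hn₃, expand ((1-2*α)*⟪e,e⟫) (-(2*⟪v,v⟫)) (-(2⁻¹)) 0]; nlinarith [hee, hvv, halpha, mul_pos hee hvv]
  have hb3b : ⟪b, n₃⟫ ≤ ⟪m, n₃⟫ + ⟪e,e⟫*⟪v,v⟫ := by
    rw [hB, hn₃, expand ((1-2*α)*⟪e,e⟫) (-(2*⟪v,v⟫)) (2⁻¹) 0]; nlinarith [hee, hvv, halpha, mul_pos hee hvv]
  have hb3c : ⟪c', n₃⟫ ≤ ⟪m, n₃⟫ + ⟪e,e⟫*⟪v,v⟫ := by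
    rw [hC', hn₃, expand ((1-2*α)*⟪e,e⟫) (-(2*⟪v,v⟫)) (-α) 1]; nlinarith [hee, hvv, halpha, mul_pos hee hvv]
  have haK : a ∈ convexHull ℝ ({a, b, c} : Set (EuclideanSpace ℝ (Fin 2))) :=
    subset_convexHull ℝ _ (by simp)
  have hcK : c ∈ convexHull ℝ ({a, b, c} : Set (EuclideanSpace ℝ (Fin 2))) :=
    subset_convexHull ℝ _ (by simp)
  obtain ⟨u1, hu1, w1, hw1, heqa⟩ := Set.mem_add.1 (hsub haK)
  rw [Set.mem_singleton_iff] at hu1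
  obtain ⟨pa, hpa, hw1'⟩ := Set.mem_smul_set.1 hw1
  rw [hu1] at heqa
  rw [← hw1'] at heqa
  obtain ⟨u2, hu2, w2, hw2, heqc⟩ := Set.mem_add.1 (hsub hcK)
  rw [Set.mem_singleton_iff] at hu2
  obtain ⟨pc, hpc, hw2'⟩ := Set.mem_smul_set.1 hw2
  rw [hu2] at heqc
  rw [← hw2'] at heqc
  have f1 : ⟪a, n₁⟫ = ⟪u, n₁⟫ + t * ⟪pa, n₁⟫ := by
    rw [← heqa, inner_add_left, real_inner_smul_left]
  have f3 : ⟪a, n₃⟫ = ⟪u, n₃⟫ + t * ⟪pa, n₃⟫ := by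
    rw [← heqa, inner_add_left, real_inner_smul_left]
  have f2 : ⟪c, n₂⟫ = ⟪u, n₂⟫ + t * ⟪pc, n₂⟫ := by
    rw [← heqc, inner_add_left, real_inner_smul_left]
  have hsumu : ⟪u, n₁⟫ + ⟪u, n₂⟫ + ⟪u, n₃⟫ = 0 := by
    rw [← inner_add_right, ← inner_add_right, hsum, inner_zero_right]
  have hsumm : ⟪m, n₁⟫ + ⟪m, n₂⟫ + ⟪m, n₃⟫ = 0 := by
    rw [← inner_add_right, ← inner_add_right, hsum, inner_zero_right]
  have val1 : ⟪a, n₁⟫ = ⟪m, n₁⟫ := by rw [hA, hn₁, expand (-(2*⟪e,e⟫)) 0 (-(2⁻¹)) 0]; ring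
  have val2 : ⟪c, n₂⟫ = ⟪m, n₂⟫ + (4*α+1)*(⟪e,e⟫*⟪v,v⟫) := by
    rw [hC, hn₂, expand ((2*α+1)*⟪e,e⟫) (2*⟪v,v⟫) α 1]; ring
  have val3 : ⟪a, n₃⟫ = ⟪m, n₃⟫ + ⟪e,e⟫*⟪v,v⟫ := by rw [hA, hn₃, expand ((1-2*α)*⟪e,e⟫) (-(2*⟪v,v⟫)) (-(2⁻¹)) 0]; ring
  have gt1 : t * ⟪pa, n₁⟫ ≤ t * ⟪m, n₁⟫ :=
    mul_le_mul_of_nonneg_left (hbound n₁ _ hb1a hb1b hb1c pa hpa) (le_of_lt ht)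
  have gt2 : t * ⟪pc, n₂⟫ ≤ t * (⟪m, n₂⟫ + ⟪e,e⟫*⟪v,v⟫) :=
    mul_le_mul_of_nonneg_left (hbound n₂ _ hb2a hb2b hb2c pc hpc) (le_of_lt ht)
  have gt3 : t * ⟪pa, n₃⟫ ≤ t * (⟪m, n₃⟫ + ⟪e,e⟫*⟪v,v⟫) :=
    mul_le_mul_of_nonneg_left (hbound n₃ _ hb3a hb3b hb3c pa hpa) (le_of_lt ht)
  nlinarith [mul_pos hee hvv, f1, f2, f3, val1, val2, val3, gt1, gt2, gt3,
    hsumu, hsumm, hee, hvv, halpha, ht]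

set_option maxHeartbeats 1000000 in
theorem stmt_13 (a b c : EuclideanSpace ℝ (Fin 2))
    (hind : AffineIndependent ℝ ![a, b, c])
    (x y z : ℝ) (hx : x = dist b c) (hy : y = dist a c) (hz : z = dist a b)
    (hxy : x ≤ y) :
    circumradius (convexHull ℝ {a, b, c})
        ((EuclideanGeometry.reflection (AffineSubspace.perpBisector a b)) ''
          (convexHull ℝ {a, b, c})) =
      1 + (y ^ 2 - x ^ 2) / z ^ 2 := by
  classical
  have hab : a ≠ b := by
    intro h
    have h01 : ![a,b,c] 0 = ![a,b,c] 1 := by simpa using h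
    have := hind.injective h01
    exact absurd this (by decide)
  obtain ⟨m, hm⟩ : ∃ w : EuclideanSpace ℝ (Fin 2), w = midpoint ℝ a b := ⟨_, rfl⟩
  obtain ⟨e, he⟩ : ∃ w : EuclideanSpace ℝ (Fin 2), w = b - a := ⟨_, rfl⟩
  have he0 : e ≠ 0 := he ▸ sub_ne_zero.2 (Ne.symm hab)
  have hee : (0:ℝ) < ⟪e, e⟫ := by
    rw [real_inner_self_eq_norm_sq]
    exact pow_pos (norm_pos_iff.2 he0) 2
  obtain ⟨α, hαdef⟩ : ∃ r : ℝ, r = ⟪c - m, e⟫ / ⟪e, e⟫ := ⟨_, rfl⟩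
  obtain ⟨v, hv⟩ : ∃ w : EuclideanSpace ℝ (Fin 2), w = c - m - α • e := ⟨_, rfl⟩
  have hve : ⟪v, e⟫ = 0 := by
    rw [hv, inner_sub_left, real_inner_smul_left, hαdef,
      div_mul_cancel₀ _ (ne_of_gt hee), sub_self]
  have hev : ⟪e, v⟫ = 0 := by rw [real_inner_comm]; exact hve
  have hm2 : m = (2⁻¹:ℝ) • (a + b) := by rw [hm, midpoint_eq_smul_add, invOf_eq_inv]
  have hA : a = m + (-(2⁻¹) : ℝ) • e + (0:ℝ) • v := by rw [hm2, he]; module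
  have hB : b = m + ((2⁻¹) : ℝ) • e + (0:ℝ) • v := by rw [hm2, he]; module
  have hC : c = m + α • e + (1:ℝ) • v := by rw [hv]; module
  have hv0 : v ≠ 0 := by
    intro h0
    have hcol : Collinear ℝ ({a, b, c} : Set (EuclideanSpace ℝ (Fin 2))) := by
      rw [collinear_iff_of_mem (Set.mem_insert a _)]
      refine ⟨e, fun p hp => ?_⟩
      simp only [Set.mem_insert_iff, Set.mem_singleton_iff] at hp
      rcases hp with h | h | h
      · exact ⟨0, by rw [h]; simp⟩
      · exact ⟨1, by rw [h, vadd_eq_add, he]; module⟩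
      · refine ⟨2⁻¹ + α, ?_⟩
        have h5 : c = m + α • e + (1:ℝ) • (0 : EuclideanSpace ℝ (Fin 2)) := h0 ▸ hC
        rw [h, vadd_eq_add, h5, hm2, he]; module
    exact (affineIndependent_iff_not_collinear_set.1 hind) hcol
  have hvv : (0:ℝ) < ⟪v, v⟫ := by
    rw [real_inner_self_eq_norm_sq]
    exact pow_pos (norm_pos_iff.2 hv0) 2
  have expand2 : ∀ (β₁ γ₁ β₂ γ₂ : ℝ), ⟪β₁ • e + γ₁ • v, β₂ • e + γ₂ • v⟫
      = β₁ * β₂ * ⟪e,e⟫ + γ₁ * γ₂ * ⟪v,v⟫ := by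
    intro β₁ γ₁ β₂ γ₂
    simp only [inner_add_left, inner_add_right, real_inner_smul_left, real_inner_smul_right,
      hve, hev]
    ring
  have hz2 : z^2 = ⟪e,e⟫ := by
    rw [hz, dist_eq_norm, ← real_inner_self_eq_norm_sq]
    have h5 : a - b = (-1:ℝ) • e + (0:ℝ) • v := by rw [he]; module
    rw [h5, expand2]; ring
  have hy2 : y^2 = (2⁻¹ + α)^2 * ⟪e,e⟫ + ⟪v,v⟫ := by
    rw [hy, dist_eq_norm, ← real_inner_self_eq_norm_sq]
    have h5 : a - c = (-(2⁻¹ + α)) • e + (-1:ℝ) • v := by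
      rw [hv, hm2, he]; module
    rw [h5, expand2]; ring
  have hx2 : x^2 = (2⁻¹ - α)^2 * ⟪e,e⟫ + ⟪v,v⟫ := by
    rw [hx, dist_eq_norm, ← real_inner_self_eq_norm_sq]
    have h5 : b - c = ((2⁻¹ - α)) • e + (-1:ℝ) • v := by
      rw [hv, hm2, he]; module
    rw [h5, expand2]; ring
  have halpha : 0 ≤ α := by
    have hx0 : 0 ≤ x := hx ▸ dist_nonneg
    have hy0 : 0 ≤ y := hy ▸ dist_nonneg
    have h5 : x^2 ≤ y^2 := by nlinarith
    rw [hx2, hy2] at h5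
    nlinarith
  have hRHS : 1 + (y ^ 2 - x ^ 2) / z ^ 2 = 1 + 2*α := by
    rw [hy2, hx2, hz2]
    have h6 : (2⁻¹+α)^2*⟪e,e⟫ + ⟪v,v⟫ - ((2⁻¹-α)^2*⟪e,e⟫ + ⟪v,v⟫) = (2*α) * ⟪e,e⟫ := by ring
    rw [h6, mul_div_assoc, div_self (ne_of_gt hee), mul_one]
  obtain ⟨c', hc'⟩ : ∃ w : EuclideanSpace ℝ (Fin 2), w = c - (2*α) • e := ⟨_, rfl⟩
  have hrefla : EuclideanGeometry.reflection (AffineSubspace.perpBisector a b) a = b := by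
    have h := refl_formula a b a (-(2⁻¹)) ?_
    · rw [h]; module
    · have h0 : a - midpoint ℝ a b - (-(2⁻¹):ℝ) • (b - a) = (0 : EuclideanSpace ℝ (Fin 2)) := by
        rw [midpoint_eq_smul_add, invOf_eq_inv]; module
      rw [h0, inner_zero_left]
  have hreflb : EuclideanGeometry.reflection (AffineSubspace.perpBisector a b) b = a := by
    have h := refl_formula a b b (2⁻¹) ?_
    · rw [h]; module
    · have h0 : b - midpoint ℝ a b - ((2⁻¹):ℝ) • (b - a) = (0 : EuclideanSpace ℝ (Fin 2)) := by
        rw [midpoint_eq_smul_add, invOf_eq_inv]; module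
      rw [h0, inner_zero_left]
  have hreflc : EuclideanGeometry.reflection (AffineSubspace.perpBisector a b) c = c' := by
    have h := refl_formula a b c α ?_
    · rw [h, hc', he]
    · rw [← he, ← hm, ← hv]; exact hve
  have himg : (EuclideanGeometry.reflection (AffineSubspace.perpBisector a b)) ''
      (convexHull ℝ {a, b, c}) = convexHull ℝ ({a, b, c'} : Set (EuclideanSpace ℝ (Fin 2))) := by
    have hcoe : ⇑(EuclideanGeometry.reflection (AffineSubspace.perpBisector a b))
        = ⇑((EuclideanGeometry.reflection
            (AffineSubspace.perpBisector a b)).toAffineEquiv.toAffineMap) := rfl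
    rw [hcoe, AffineMap.image_convexHull]
    congr 1
    rw [Set.image_insert_eq, Set.image_insert_eq, Set.image_singleton]
    rw [show ((EuclideanGeometry.reflection
          (AffineSubspace.perpBisector a b)).toAffineEquiv.toAffineMap) a = b from hrefla,
      show ((EuclideanGeometry.reflection
          (AffineSubspace.perpBisector a b)).toAffineEquiv.toAffineMap) b = a from hreflb,
      show ((EuclideanGeometry.reflection
          (AffineSubspace.perpBisector a b)).toAffineEquiv.toAffineMap) c = c' from hreflc]
    rw [Set.insert_comm]
  rw [himg, hRHS]
  have hC' : c' = m + (-α) • e + (1:ℝ) • v := by rw [hc', hv]; module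
  have hmemS : (1+2*α) ∈ {t : ℝ | 0 < t ∧ ∃ w : EuclideanSpace ℝ (Fin 2),
      convexHull ℝ ({a, b, c} : Set (EuclideanSpace ℝ (Fin 2)))
        ⊆ {w} + t • convexHull ℝ ({a, b, c'} : Set (EuclideanSpace ℝ (Fin 2)))} :=
    ⟨by linarith, (1 - (1+2*α)) • a, upper_aux a b c c' e α he hc' halpha⟩
  unfold circumradius
  refine le_antisymm (csInf_le ⟨0, fun r hr => le_of_lt hr.1⟩ hmemS)
    (le_csInf ⟨_, hmemS⟩ ?_)
  rintro t ⟨ht, u, hsub⟩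
  exact lower_aux a b c c' m e v u α t hA hB hC hC' hve hev hee hvv halpha ht hsub
end

section
/- Let K = conv{a, b, c} be a triangle in ℝ² with x = ‖b − c‖ ≤ y = ‖a − c‖, and let U be the bisector of the interior angle at c. Then R(K, Φ_U(K)) = y/x, where Φ_U denotes the reflection across the line U and R the circumradius. -/
open Pointwise EuclideanGeometry

set_option maxHeartbeats 1000000 in
theorem stmt_14 (a b c : EuclideanSpace ℝ (Fin 2))
    (hind : AffineIndependent ℝ ![a, b, c])
    (x y : ℝ) (hx : x = dist b c) (hy : y = dist a c) (hxy : x ≤ y)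
    (U : AffineSubspace ℝ (EuclideanSpace ℝ (Fin 2))) [Nonempty U]
    (hcU : c ∈ U) (hdim : Module.finrank ℝ U.direction = 1)
    (hbisect : ∃ t : ℝ, 0 < t ∧
      EuclideanGeometry.reflection U a -ᵥ c = t • (b -ᵥ c)) :
    circumradius (convexHull ℝ {a, b, c})
        ((EuclideanGeometry.reflection U) '' (convexHull ℝ {a, b, c})) =
      y / x := by
  classical

  set Φ := EuclideanGeometry.reflection U with hΦdef
  have hne : ¬ Collinear ℝ ({a, b, c} : Set (EuclideanSpace ℝ (Fin 2))) :=
    affineIndependent_iff_not_collinear_set.mp hind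
  have hbc : b ≠ c := by
    have := hind.injective.ne (show (1 : Fin 3) ≠ 2 by decide)
    simpa using this
  have hx0 : 0 < x := by rw [hx]; exact dist_pos.mpr hbc
  have hy0 : 0 < y := lt_of_lt_of_le hx0 hxy
  have hΦc : Φ c = c := (EuclideanGeometry.reflection_eq_self_iff c).mpr hcU
  obtain ⟨t, ht0, hta⟩ := hbisect
  have hta' : Φ a - c = t • (b - c) := by
    simpa [vsub_eq_sub] using hta
  -- t = y / x
  have htval : t = y / x := by
    have h1 : dist c (Φ a) = dist c a := dist_reflection_eq_of_mem U hcU a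
    have h2 : ‖Φ a - c‖ = y := by
      rw [← dist_eq_norm, dist_comm, h1, dist_comm, ← hy]
    have h3 : ‖t • (b - c)‖ = t * x := by
      rw [norm_smul, Real.norm_eq_abs, abs_of_pos ht0, hx, dist_eq_norm]
    rw [hta', h3] at h2
    field_simp
    linarith
  have ha' : Φ a = c + (y / x) • (b - c) := by
    have := hta'
    rw [htval] at this
    linear_combination (norm := module) this
  -- compute Φ b
  have hΦb : Φ b = c + (x / y) • (a - c) := by
    have hLb : Φ.linearIsometryEquiv (b -ᵥ c) = Φ b -ᵥ Φ c := Φ.map_vsub b c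
    have hLa : Φ.linearIsometryEquiv (Φ a -ᵥ c) = a -ᵥ c := by
      have h := Φ.map_vsub (Φ a) c
      rw [hΦc] at h
      rw [h]
      congr 1
      exact reflection_reflection U a
    have key : a - c = t • (Φ b - c) := by
      have : Φ.linearIsometryEquiv (t • (b -ᵥ c)) = t • (Φ b -ᵥ Φ c) := by
        rw [map_smul, hLb]
      rw [← hta] at this
      rw [← vsub_eq_sub, ← vsub_eq_sub, ← hLa, this, hΦc]
    have hterm : Φ b - c = t⁻¹ • (a - c) := by
      rw [key, smul_smul, inv_mul_cancel₀ (ne_of_gt ht0), one_smul]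
    have htinv : t⁻¹ = x / y := by
      rw [htval]; field_simp
    rw [htinv] at hterm
    linear_combination (norm := module) hterm
  -- the image set
  set K : Set (EuclideanSpace ℝ (Fin 2)) := convexHull ℝ {a, b, c} with hK
  have hCimg : Φ '' K = convexHull ℝ {Φ a, Φ b, c} := by
    have h1 : Φ '' K = convexHull ℝ (Φ '' {a, b, c}) := by
      have := (Φ.toAffineEquiv.toAffineMap).image_convexHull ({a, b, c} : Set (EuclideanSpace ℝ (Fin 2)))
      simpa using this
    rw [h1]
    congr 1
    rw [Set.image_insert_eq, Set.image_insert_eq, Set.image_singleton, hΦc]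
  set C : Set (EuclideanSpace ℝ (Fin 2)) := Φ '' K with hCdef
  have hCconv : Convex ℝ C := by rw [hCimg]; exact convex_convexHull ℝ _
  have hΦaC : Φ a ∈ C := by rw [hCimg]; exact subset_convexHull ℝ _ (by simp)
  have hΦbC : Φ b ∈ C := by rw [hCimg]; exact subset_convexHull ℝ _ (by simp)
  have hcC : c ∈ C := by rw [hCimg]; exact subset_convexHull ℝ _ (by simp)
  -- membership of y/x in the defining set
  set S : Set ℝ := {t : ℝ | 0 < t ∧ ∃ z : EuclideanSpace ℝ (Fin 2), K ⊆ {z} + t • C} with hS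
  have hmemS : (y / x) ∈ S := by
    refine ⟨div_pos hy0 hx0, c - (y / x) • c, ?_⟩
    set z : EuclideanSpace ℝ (Fin 2) := c - (y / x) • c with hz
    have hconvRHS : Convex ℝ ({z} + (y / x) • C) :=
      (convex_singleton z).add (hCconv.smul _)
    have hmem : ∀ p ∈ C, ∀ w : EuclideanSpace ℝ (Fin 2), z + (y / x) • p = w → w ∈ {z} + (y / x) • C := by
      rintro p hp w rfl
      exact Set.add_mem_add rfl (Set.smul_mem_smul_set hp)
    refine convexHull_min ?_ hconvRHS
    rw [Set.insert_subset_iff, Set.insert_subset_iff, Set.singleton_subset_iff]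
    refine ⟨?_, ?_, ?_⟩
    · -- a
      refine hmem (Φ b) hΦbC _ ?_
      rw [hΦb, hz]
      match_scalars <;> field_simp <;> ring
    · -- b
      have hs0 : (0:ℝ) ≤ (x / y) * (x / y) := mul_nonneg (by positivity) (by positivity)
      have hs1 : (x / y) * (x / y) ≤ 1 := by
        have hxy' : x / y ≤ 1 := (div_le_one hy0).mpr hxy
        have h0 : (0:ℝ) ≤ x / y := by positivity
        nlinarith
      set p : EuclideanSpace ℝ (Fin 2) := c + ((x / y) * (x / y)) • (Φ a - c) with hp
      have hpC : p ∈ C := by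
        have hseg : p ∈ segment ℝ c (Φ a) := by
          rw [segment_eq_image']
          exact ⟨(x / y) * (x / y), ⟨hs0, hs1⟩, rfl⟩
        exact hCconv.segment_subset hcC hΦaC hseg
      refine hmem p hpC _ ?_
      rw [hp, ha', hz]
      match_scalars <;> field_simp <;> ring
    · -- c
      refine hmem c hcC _ ?_
      rw [hz]; abel
  -- lower bound
  have hlower : ∀ s ∈ S, y / x ≤ s := by
    rintro s ⟨hs0, z, hKsub⟩
    set u : EuclideanSpace ℝ (Fin 2) := b - c with hu
    set v : EuclideanSpace ℝ (Fin 2) := a - c with hv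
    have hu0 : u ≠ 0 := sub_ne_zero.mpr hbc
    set n : EuclideanSpace ℝ (Fin 2) := v - (inner ℝ v u / inner ℝ u u : ℝ) • u with hn
    have hun : (inner ℝ u n : ℝ) = 0 := by
      rw [hn, inner_sub_right, real_inner_smul_right, real_inner_comm v u]
      have h0 : (inner ℝ u u : ℝ) ≠ 0 := inner_self_ne_zero.mpr hu0
      rw [div_mul_cancel₀ _ h0, sub_self]
    have hn0 : n ≠ 0 := by
      intro h
      apply hne
      rw [collinear_iff_of_mem (show c ∈ ({a, b, c} : Set (EuclideanSpace ℝ (Fin 2))) by simp)]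
      refine ⟨u, ?_⟩
      rintro p (rfl | rfl | rfl)
      · refine ⟨(inner ℝ v u / inner ℝ u u : ℝ), ?_⟩
        have hv' : v = (inner ℝ v u / inner ℝ u u : ℝ) • u := by
          have := sub_eq_zero.mp h; exact this
        rw [vadd_eq_add, ← hv']
        rw [hv]; abel
      · exact ⟨1, by rw [vadd_eq_add, one_smul, hu]; abel⟩
      · exact ⟨0, by rw [vadd_eq_add, zero_smul, zero_add]⟩
    have hvn : (inner ℝ v n : ℝ) = (inner ℝ n n : ℝ) := by
      have h2 : (inner ℝ (v - (inner ℝ v u / inner ℝ u u : ℝ) • u) n : ℝ) =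
          inner ℝ v n - (inner ℝ v u / inner ℝ u u : ℝ) * inner ℝ u n := by
        rw [inner_sub_left, real_inner_smul_left]
      rw [← hn] at h2
      rw [hun, mul_zero, sub_zero] at h2
      exact h2.symm
    have hnn : (0 : ℝ) < inner ℝ n n := by rw [real_inner_self_eq_norm_sq]; exact pow_pos (norm_pos_iff.mpr hn0) 2
    -- the linear functional
    have hlin : IsLinearMap ℝ (fun w : EuclideanSpace ℝ (Fin 2) => (inner ℝ w n : ℝ)) :=
      ⟨fun w₁ w₂ => inner_add_left _ _ _, fun r w => real_inner_smul_left _ _ r⟩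
    set M : ℝ := (x / y) * (inner ℝ v n : ℝ) with hM
    have hCbound : ∀ w ∈ C, (inner ℝ c n : ℝ) ≤ inner ℝ w n ∧
        (inner ℝ w n : ℝ) ≤ inner ℝ c n + M := by
      have hD : Convex ℝ {w : EuclideanSpace ℝ (Fin 2) | (inner ℝ c n : ℝ) ≤ inner ℝ w n ∧
          (inner ℝ w n : ℝ) ≤ inner ℝ c n + M} := by
        exact (convex_halfSpace_ge hlin _).inter (convex_halfSpace_le hlin _)
      have hsub : ({Φ a, Φ b, c} : Set (EuclideanSpace ℝ (Fin 2))) ⊆ {w : EuclideanSpace ℝ (Fin 2) | (inner ℝ c n : ℝ) ≤ inner ℝ w n ∧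
          (inner ℝ w n : ℝ) ≤ inner ℝ c n + M} := by
        have hMnn : 0 ≤ M := by
          rw [hM, hvn]; positivity
        rintro w (rfl | rfl | rfl)
        · constructor
          · rw [ha', inner_add_left, real_inner_smul_left, hun]
            simp
          · rw [ha', inner_add_left, real_inner_smul_left, hun]
            simpa using hMnn
        · constructor
          · rw [hΦb, inner_add_left, real_inner_smul_left]
            nlinarith [hvn, hnn, div_pos hx0 hy0]
          · rw [hΦb, inner_add_left, real_inner_smul_left, hM]
        · exact ⟨le_refl _, by linarith⟩
      intro w hw
      rw [hCimg] at hw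
      exact convexHull_min hsub hD hw
    have haK : a ∈ K := subset_convexHull ℝ _ (by simp)
    have hcK : c ∈ K := subset_convexHull ℝ _ (by simp)
    obtain ⟨za, hza, wa, hwa, hawsum⟩ := hKsub haK
    obtain ⟨zc, hzc, wc, hwc, hcwsum⟩ := hKsub hcK
    rw [Set.mem_singleton_iff] at hza hzc
    subst hza hzc
    obtain ⟨p, hpC, rfl⟩ := hwa
    obtain ⟨q, hqC, rfl⟩ := hwc
    have hdiff : v = s • (p - q) := by
      rw [hv, ← hawsum, ← hcwsum]
      rw [smul_sub]; beta_reduce; abel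
    have hip : (inner ℝ v n : ℝ) = s * ((inner ℝ p n : ℝ) - (inner ℝ q n : ℝ)) := by
      rw [hdiff, real_inner_smul_left, inner_sub_left]
    have hbp := hCbound p hpC
    have hbq := hCbound q hqC
    have hkey : (inner ℝ v n : ℝ) ≤ s * M := by
      rw [hip]
      have : (inner ℝ p n : ℝ) - inner ℝ q n ≤ M := by linarith [hbp.2, hbq.1]
      nlinarith
    -- conclude
    rw [hvn] at hkey
    rw [hM, hvn] at hkey
    have h1 : 1 * (inner ℝ n n : ℝ) ≤ s * (x / y) * inner ℝ n n := by
      ring_nf; ring_nf at hkey; linarith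
    have h2 : (1:ℝ) ≤ s * (x / y) := le_of_mul_le_mul_right h1 hnn
    have h3 : y * 1 ≤ y * (s * (x / y)) := mul_le_mul_of_nonneg_left h2 hy0.le
    have h4 : y * (s * (x / y)) = s * x := by field_simp
    rw [h4, mul_one] at h3
    rw [div_le_iff₀ hx0]
    linarith
  have hSne : S.Nonempty := ⟨y / x, hmemS⟩
  have hSbdd : BddBelow S := ⟨0, fun r hr => le_of_lt hr.1⟩
  unfold circumradius
  exact le_antisymm (csInf_le hSbdd hmemS) (le_csInf hSne hlower)
end
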